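/- For every initial condition u(0) in the simplex Δ^S, the mean-field ODE system du/dt = f(u(t)) = Q(u(t)) u(t) has a unique global solution u : [0,∞) → ℝ^S, and this solution satisfies u(t) ∈ Δ^S for all t ≥ 0. -/

import Mathlib

open Finset

noncomputable section

/-- The probability simplex on a finite state space `S`. -/
def simplex (S : Type*) [Fintype S] : Set (S → ℝ) :=
  {v | (∀ s, 0 ≤ v s ∧ v s ≤ 1) ∧ ∑ s, v s = 1}

namespace Stmt11Aux

/-- clamp a real number to [0,1] -/
def clamp1 (x : ℝ) : ℝ := min (max x 0) 1

lemma clamp1_nonneg (x : ℝ) : 0 ≤ clamp1 x :=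
  le_min (le_max_right _ _) zero_le_one

lemma clamp1_le_one (x : ℝ) : clamp1 x ≤ 1 := min_le_right _ _

lemma clamp1_of_mem (x : ℝ) (h0 : 0 ≤ x) (h1 : x ≤ 1) : clamp1 x = x := by
  unfold clamp1; rw [max_eq_left h0, min_eq_left h1]

lemma clamp1_eq_zero {x : ℝ} (h : x ≤ 0) : clamp1 x = 0 := by
  unfold clamp1; rw [max_eq_right h, min_eq_left zero_le_one]

lemma lipschitzWith_clamp1 : LipschitzWith 1 clamp1 :=
  (LipschitzWith.id.max_const 0).min_const 1

variable {S : Type*} [Fintype S]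

/-- coordinatewise clamp -/
def clampV (w : S → ℝ) : S → ℝ := fun s => clamp1 (w s)

lemma clampV_mem (w : S → ℝ) : clampV w ∈ Set.Icc (0 : S → ℝ) 1 :=
  ⟨fun s => clamp1_nonneg _, fun s => clamp1_le_one _⟩

lemma clampV_dist_le (w w' : S → ℝ) : dist (clampV w) (clampV w') ≤ dist w w' := by
  rw [dist_pi_le_iff dist_nonneg]
  intro s
  calc dist (clampV w s) (clampV w' s) ≤ 1 * dist (w s) (w' s) := by
        simpa [clampV] using lipschitzWith_clamp1.dist_le_mul (w s) (w' s)
    _ ≤ dist w w' := by simpa using dist_le_pi_dist w w' s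

lemma clampV_eq_self {w : S → ℝ} (h : ∀ s, 0 ≤ w s ∧ w s ≤ 1) : clampV w = w := by
  funext s; exact clamp1_of_mem _ (h s).1 (h s).2

/-- A C¹ map is Lipschitz on a convex compact set. -/
lemma lipschitzOnWith_of_contDiff {E F : Type*} [NormedAddCommGroup E] [NormedSpace ℝ E]
    [NormedAddCommGroup F] [NormedSpace ℝ F] {f : E → F} (hf : ContDiff ℝ 1 f)
    {s : Set E} (hs : Convex ℝ s) (hc : IsCompact s) : ∃ K : NNReal, LipschitzOnWith K f s := by
  have hcont : Continuous (fderiv ℝ f) := hf.continuous_fderiv one_ne_zero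
  obtain ⟨C, hC⟩ := hc.exists_bound_of_continuousOn hcont.continuousOn
  refine ⟨⟨max C 0, le_max_right _ _⟩,
    hs.lipschitzOnWith_of_nnnorm_fderiv_le (fun x _ => hf.differentiable one_ne_zero x)
      (fun x hx => ?_)⟩
  change (‖fderiv ℝ f x‖₊ : ℝ) ≤ max C 0
  exact le_trans (hC x hx) (le_max_left _ _)

/-- Real-valued invariance lemma: if `y 0 ≥ 0` and `y' ≥ 0` whenever `y ≤ 0`, then `y ≥ 0`. -/
lemma nonneg_of_deriv_cond {y y' : ℝ → ℝ}
    (hy : ∀ t ∈ Set.Ici (0:ℝ), HasDerivWithinAt y (y' t) (Set.Ici 0) t)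
    (h0 : 0 ≤ y 0) (hcond : ∀ t ∈ Set.Ici (0:ℝ), y t ≤ 0 → 0 ≤ y' t) :
    ∀ t ∈ Set.Ici (0:ℝ), 0 ≤ y t := by
  intro t1 ht1
  by_contra hneg
  push_neg at hneg
  have ht1pos : 0 < t1 := by
    rcases lt_or_eq_of_le (show (0:ℝ) ≤ t1 from ht1) with h | h
    · exact h
    · exfalso; rw [← h] at hneg; linarith
  have hycont : ContinuousOn y (Set.Ici 0) := fun τ hτ => (hy τ hτ).continuousWithinAt
  set A : Set ℝ := Set.Icc 0 t1 ∩ {τ | 0 ≤ y τ} with hA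
  have hAne : A.Nonempty := ⟨0, ⟨le_rfl, ht1pos.le⟩, h0⟩
  have hAclosed : IsClosed A :=
    ContinuousOn.preimage_isClosed_of_isClosed
      (hycont.mono (fun τ hτ => hτ.1)) isClosed_Icc isClosed_Ici
  have hAcomp : IsCompact A := isCompact_Icc.of_isClosed_subset hAclosed (fun τ hτ => hτ.1)
  set t0 := sSup A with ht0def
  have ht0A : t0 ∈ A := hAcomp.sSup_mem hAne
  have ht0nonneg : 0 ≤ t0 := ht0A.1.1
  have ht0le : t0 ≤ t1 := ht0A.1.2
  have hyt0 : 0 ≤ y t0 := ht0A.2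
  have ht0lt : t0 < t1 := by
    rcases lt_or_eq_of_le ht0le with h | h
    · exact h
    · exfalso; rw [h] at hyt0; linarith
  have hbelow : ∀ τ ∈ Set.Ioc t0 t1, y τ < 0 := by
    intro τ hτ
    by_contra hge
    push_neg at hge
    have : τ ∈ A := ⟨⟨ht0nonneg.trans hτ.1.le, hτ.2⟩, hge⟩
    exact absurd (le_csSup hAcomp.bddAbove this) (not_le.mpr hτ.1)
  -- y is monotone on [t0, t1]
  have hmono : MonotoneOn y (Set.Icc t0 t1) := by
    apply monotoneOn_of_deriv_nonneg (convex_Icc _ _)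
    · exact hycont.mono (fun τ hτ => ht0nonneg.trans hτ.1)
    · intro τ hτ
      rw [interior_Icc] at hτ
      have hτ0 : 0 < τ := lt_of_le_of_lt ht0nonneg hτ.1
      exact ((hy τ hτ0.le).hasDerivAt (Ici_mem_nhds hτ0)).differentiableAt.differentiableWithinAt
    · intro τ hτ
      rw [interior_Icc] at hτ
      have hτ0 : 0 < τ := lt_of_le_of_lt ht0nonneg hτ.1
      have hd : HasDerivAt y (y' τ) τ := (hy τ hτ0.le).hasDerivAt (Ici_mem_nhds hτ0)
      rw [hd.deriv]
      exact hcond τ hτ0.le (hbelow τ ⟨hτ.1, hτ.2.le⟩).le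
  have := hmono (Set.left_mem_Icc.mpr ht0le) (Set.right_mem_Icc.mpr ht0le) ht0le
  -- careful: rewrite above
  exact absurd (hyt0.trans this) (not_le.mpr hneg)


lemma Icc_mem_nhdsWithin_Ici' {a b t : ℝ} (hta : a ≤ t) (htb : t < b) :
    Set.Icc a b ∈ nhdsWithin t (Set.Ici t) := by
  have h2 : Set.Iio b ∈ nhdsWithin t (Set.Ici t) :=
    mem_nhdsWithin_of_mem_nhds (Iio_mem_nhds htb)
  exact Filter.mem_of_superset (Filter.inter_mem h2 self_mem_nhdsWithin)
    (fun x hx => ⟨hta.trans hx.2, hx.1.le⟩)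

/-- Uniqueness on `[0,b]` for a globally Lipschitz autonomous vector field. -/
lemma uniq_on_Icc {E : Type*} [NormedAddCommGroup E] [NormedSpace ℝ E] {g : E → E} {K : NNReal}
    (hg : LipschitzWith K g) {b : ℝ} {x y : ℝ → E}
    (hx : ∀ t ∈ Set.Icc (0:ℝ) b, HasDerivWithinAt x (g (x t)) (Set.Icc 0 b) t)
    (hy : ∀ t ∈ Set.Icc (0:ℝ) b, HasDerivWithinAt y (g (y t)) (Set.Icc 0 b) t)
    (h0 : x 0 = y 0) : Set.EqOn x y (Set.Icc 0 b) := by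
  apply ODE_solution_unique_of_mem_Icc_right (v := fun _ => g) (s := fun _ => Set.univ)
    (K := K) (fun _ _ => hg.lipschitzOnWith)
  · exact fun t ht => (hx t ht).continuousWithinAt
  · exact fun t ht =>
      (hx t ⟨ht.1, ht.2.le⟩).mono_of_mem_nhdsWithin (Icc_mem_nhdsWithin_Ici' ht.1 ht.2)
  · exact fun t _ => Set.mem_univ _
  · exact fun t ht => (hy t ht).continuousWithinAt
  · exact fun t ht =>
      (hy t ⟨ht.1, ht.2.le⟩).mono_of_mem_nhdsWithin (Icc_mem_nhdsWithin_Ici' ht.1 ht.2)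
  · exact fun t _ => Set.mem_univ _
  · exact h0

/-- A bounded globally Lipschitz autonomous vector field has a solution on `[0,n]`. -/
lemma exists_sol_on_Icc {E : Type*} [NormedAddCommGroup E] [NormedSpace ℝ E] [CompleteSpace E]
    {g : E → E} {K : NNReal} (hg : LipschitzWith K g) {C : ℝ} (hC : 0 ≤ C)
    (hbound : ∀ w, ‖g w‖ ≤ C) (x₀ : E) (n : ℕ) :
    ∃ x : ℝ → E, x 0 = x₀ ∧
      ∀ t ∈ Set.Icc (0:ℝ) n, HasDerivWithinAt x (g (x t)) (Set.Icc 0 n) t := by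
  have hpl : IsPicardLindelof (fun _ => g) (tmin := 0) (tmax := n) ⟨0, le_rfl, n.cast_nonneg⟩ x₀
      ⟨C * n, by positivity⟩ 0 ⟨C, hC⟩ K :=
    { lipschitzOnWith := fun _ _ => hg.lipschitzOnWith
      continuousOn := fun _ _ => continuousOn_const
      norm_le := fun _ _ w _ => hbound w
      mul_max_le := by
        have : (0:ℝ) ≤ n := n.cast_nonneg
        simp [max_eq_left this]
        exact le_rfl }
  exact hpl.exists_eq_forall_mem_Icc_hasDerivWithinAt₀


lemma Icc_mem_nhdsWithin_Ici'' {a b t : ℝ} (hta : a ≤ t) (htb : t < b) :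
    Set.Icc a b ∈ nhdsWithin t (Set.Ici a) := by
  have h2 : Set.Iio b ∈ nhdsWithin t (Set.Ici a) :=
    mem_nhdsWithin_of_mem_nhds (Iio_mem_nhds htb)
  have h3 : Set.Ici a ∈ nhdsWithin t (Set.Ici a) := self_mem_nhdsWithin
  exact Filter.mem_of_superset (Filter.inter_mem h2 h3) (fun x hx => ⟨hx.2, hx.1.le⟩)

/-- Global solution on `[0,∞)` for a bounded globally Lipschitz vector field. -/
lemma exists_global_sol {E : Type*} [NormedAddCommGroup E] [NormedSpace ℝ E] [CompleteSpace E]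
    {g : E → E} {K : NNReal} (hg : LipschitzWith K g) {C : ℝ} (hC : 0 ≤ C)
    (hbound : ∀ w, ‖g w‖ ≤ C) (x₀ : E) :
    ∃ u : ℝ → E, u 0 = x₀ ∧ ∀ t ∈ Set.Ici (0:ℝ), HasDerivWithinAt u (g (u t)) (Set.Ici 0) t := by
  choose α hα0 hαd using fun n : ℕ => exists_sol_on_Icc hg hC hbound x₀ n
  have hcons : ∀ m n : ℕ, m ≤ n → Set.EqOn (α m) (α n) (Set.Icc 0 m) := by
    intro m n hmn
    have hsub : Set.Icc (0:ℝ) m ⊆ Set.Icc (0:ℝ) n :=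
      Set.Icc_subset_Icc le_rfl (by exact_mod_cast hmn)
    exact uniq_on_Icc hg (hαd m)
      (fun t ht => (hαd n t (hsub ht)).mono hsub)
      (by rw [hα0, hα0])
  refine ⟨fun t => α (⌈t⌉₊ + 1) t, by simpa using hα0 1, ?_⟩
  intro t ht
  have ht' : (0:ℝ) ≤ t := ht
  set N := ⌈t⌉₊ + 2 with hN
  have htIcc : ∀ x ∈ Set.Icc (0:ℝ) (t+1), α (⌈x⌉₊ + 1) x = α N x := by
    intro x hx
    have h1 : ⌈x⌉₊ + 1 ≤ N := by
      have h2 : ⌈x⌉₊ ≤ ⌈t+1⌉₊ := Nat.ceil_le_ceil hx.2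
      have h3 : ⌈t+1⌉₊ = ⌈t⌉₊ + 1 := Nat.ceil_add_one ht'
      omega
    have hxmem : x ∈ Set.Icc (0:ℝ) ((⌈x⌉₊ + 1 : ℕ) : ℝ) := ⟨hx.1, by
      push_cast; linarith [Nat.le_ceil x]⟩
    exact hcons _ _ h1 hxmem
  have htN : t ∈ Set.Icc (0:ℝ) (t+1) := ⟨ht', by linarith⟩
  have hsubN : Set.Icc (0:ℝ) (t+1) ⊆ Set.Icc (0:ℝ) (N : ℝ) := by
    apply Set.Icc_subset_Icc le_rfl
    have := Nat.le_ceil t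
    rw [hN]
    push_cast
    linarith
  have hd : HasDerivWithinAt (α N) (g (α N t)) (Set.Icc 0 (t+1)) t :=
    (hαd N t (hsubN htN)).mono hsubN
  have hd2 : HasDerivWithinAt (fun x => α (⌈x⌉₊ + 1) x) (g (α N t)) (Set.Icc 0 (t+1)) t :=
    hd.congr (fun x hx => htIcc x hx) (htIcc t htN)
  rw [← htIcc t htN] at hd2
  exact hd2.mono_of_mem_nhdsWithin (Icc_mem_nhdsWithin_Ici'' ht' (by linarith))

end Stmt11Aux

/-- For every initial condition `u 0 ∈ Δ^S`, the mean-field ODE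
`du/dt = f(u(t)) = Q(u(t)) u(t)` has a unique global solution on `[0,∞)`, and
this solution stays in the simplex `Δ^S`. -/


theorem stmt_11 {S : Type*} [Fintype S] [DecidableEq S] [Nonempty S]
    (q0 : S → S → ℝ) (q1 : S → S → S → ℝ)
    (hq0 : ∀ s s', s ≠ s' → 0 ≤ q0 s s')
    (hq1 : ∀ s s' r, s ≠ s' → 0 ≤ q1 s s' r)
    (q : S → S → (S → ℝ) → ℝ)
    (hqoff : ∀ s s', s ≠ s' → ∀ φ, q s s' φ = q0 s s' + ∑ r, q1 s s' r * φ r)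
    (hqdiag : ∀ s φ, q s s φ = -∑ s' ∈ Finset.univ.filter (· ≠ s), q s' s φ)
    (f : (S → ℝ) → (S → ℝ)) (hf : ∀ v s, f v s = ∑ s', q s s' v * v s')
    (u0 : S → ℝ) (hu0 : u0 ∈ simplex S) :
    (∃ u : ℝ → S → ℝ, u 0 = u0 ∧
        (∀ t ∈ Set.Ici (0 : ℝ), HasDerivWithinAt u (f (u t)) (Set.Ici 0) t) ∧
        (∀ t ∈ Set.Ici (0 : ℝ), u t ∈ simplex S)) ∧
      (∀ u v : ℝ → S → ℝ, u 0 = u0 → v 0 = u0 →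
        (∀ t ∈ Set.Ici (0 : ℝ), HasDerivWithinAt u (f (u t)) (Set.Ici 0) t) →
        (∀ t ∈ Set.Ici (0 : ℝ), HasDerivWithinAt v (f (v t)) (Set.Ici 0) t) →
        ∀ t ∈ Set.Ici (0 : ℝ), u t = v t) := by
  classical
  obtain ⟨hu0mem, hu0sum⟩ := hu0
  have hproj : ∀ r : S, ContDiff ℝ 1 (fun v : S → ℝ => v r) := fun r =>
    (ContinuousLinearMap.proj r : (S → ℝ) →L[ℝ] ℝ).contDiff
  have hoff : ∀ s s', s ≠ s' → ContDiff ℝ 1 (fun v => q s s' v) := by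
    intro s s' hne
    have h : (fun v => q s s' v) = fun v : S → ℝ => q0 s s' + ∑ r, q1 s s' r * v r := by
      funext v; exact hqoff s s' hne v
    rw [h]
    exact contDiff_const.add (ContDiff.sum fun r _ => contDiff_const.mul (hproj r))
  have hq_cd : ∀ s s', ContDiff ℝ 1 (fun v => q s s' v) := by
    intro s s'
    by_cases h : s = s'
    · subst h
      have h2 : (fun v => q s s v) = fun v => -∑ s' ∈ Finset.univ.filter (· ≠ s), q s' s v := by
        funext v; exact hqdiag s v
      rw [h2]
      exact (ContDiff.sum fun s' hs' =>
        hoff s' s (by simpa using (Finset.mem_filter.mp hs').2)).neg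
    · exact hoff s s' h
  have hf_cd : ContDiff ℝ 1 f := by
    rw [contDiff_pi]
    intro s
    have h : (fun v => f v s) = fun v => ∑ s', q s s' v * v s' := by
      funext v; exact hf v s
    rw [h]
    exact ContDiff.sum fun s' _ => (hq_cd s s').mul (hproj s')
  -- clamped vector field
  set g : (S → ℝ) → (S → ℝ) := fun w => f (Stmt11Aux.clampV w) with hgdef
  obtain ⟨K, hK⟩ := Stmt11Aux.lipschitzOnWith_of_contDiff hf_cd
    (convex_Icc (0 : S → ℝ) 1) isCompact_Icc
  have hgLip : LipschitzWith K g := by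
    apply LipschitzWith.of_dist_le_mul
    intro w w'
    calc dist (g w) (g w') ≤ K * dist (Stmt11Aux.clampV w) (Stmt11Aux.clampV w') :=
          hK.dist_le_mul _ (Stmt11Aux.clampV_mem w) _ (Stmt11Aux.clampV_mem w')
      _ ≤ K * dist w w' :=
          mul_le_mul_of_nonneg_left (Stmt11Aux.clampV_dist_le w w') K.coe_nonneg
  obtain ⟨C0, hC0⟩ := isCompact_Icc.exists_bound_of_continuousOn
    (hf_cd.continuous.continuousOn : ContinuousOn f (Set.Icc (0 : S → ℝ) 1))
  have hgbound : ∀ w, ‖g w‖ ≤ max C0 0 :=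
    fun w => le_trans (hC0 _ (Stmt11Aux.clampV_mem w)) (le_max_left _ _)
  obtain ⟨u, hu0', hud⟩ :=
    Stmt11Aux.exists_global_sol hgLip (le_max_right C0 0) hgbound u0
  -- column sums vanish
  have hcolsum : ∀ (φ : S → ℝ) (s' : S), ∑ s, q s s' φ = 0 := by
    intro φ s'
    rw [← Finset.add_sum_erase _ _ (Finset.mem_univ s'), hqdiag s' φ, Finset.filter_ne']
    ring
  have hgsum : ∀ w : S → ℝ, ∑ s, g w s = 0 := by
    intro w
    have h : ∑ s, g w s = ∑ s, ∑ s', q s s' (Stmt11Aux.clampV w) * Stmt11Aux.clampV w s' :=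
      Finset.sum_congr rfl fun s _ => hf (Stmt11Aux.clampV w) s
    rw [h, Finset.sum_comm]
    apply Finset.sum_eq_zero
    intro s' _
    rw [← Finset.sum_mul, hcolsum (Stmt11Aux.clampV w) s', zero_mul]
  have hqnonneg : ∀ s s', s ≠ s' → ∀ φ : S → ℝ, (∀ r, 0 ≤ φ r) → 0 ≤ q s s' φ := by
    intro s s' hne φ hφ
    rw [hqoff s s' hne φ]
    have h : 0 ≤ ∑ r, q1 s s' r * φ r :=
      Finset.sum_nonneg fun r _ => mul_nonneg (hq1 s s' r hne) (hφ r)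
    linarith [hq0 s s' hne]
  have hgpos : ∀ (w : S → ℝ) (s : S), w s ≤ 0 → 0 ≤ g w s := by
    intro w s hws
    have hcs : Stmt11Aux.clampV w s = 0 := Stmt11Aux.clamp1_eq_zero hws
    have h : g w s = ∑ s', q s s' (Stmt11Aux.clampV w) * Stmt11Aux.clampV w s' :=
      hf (Stmt11Aux.clampV w) s
    rw [h]
    apply Finset.sum_nonneg
    intro s' _
    by_cases hss : s' = s
    · subst hss; rw [hcs, mul_zero]
    · exact mul_nonneg
        (hqnonneg s s' (Ne.symm hss) _ fun r => Stmt11Aux.clamp1_nonneg _)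
        (Stmt11Aux.clamp1_nonneg _)
  have hud_coord : ∀ t ∈ Set.Ici (0:ℝ), ∀ s,
      HasDerivWithinAt (fun τ => u τ s) (g (u t) s) (Set.Ici 0) t :=
    fun t ht s => (hasDerivWithinAt_pi.mp (hud t ht)) s
  have hnonneg : ∀ t ∈ Set.Ici (0:ℝ), ∀ s, 0 ≤ u t s := by
    intro t ht s
    exact Stmt11Aux.nonneg_of_deriv_cond (y := fun τ => u τ s) (y' := fun τ => g (u τ) s)
      (fun τ hτ => hud_coord τ hτ s) (by simpa only [hu0'] using (hu0mem s).1)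
      (fun τ _ h => hgpos (u τ) s h) t ht
  have hsum1 : ∀ t ∈ Set.Ici (0:ℝ), ∑ s, u t s = 1 := by
    intro t ht
    have hder : ∀ τ ∈ Set.Ici (0:ℝ),
        HasDerivWithinAt (fun τ => ∑ s, u τ s) ((fun _ : ℝ => (0:ℝ)) τ) (Set.Ici 0) τ := by
      intro τ hτ
      have h := HasDerivWithinAt.fun_sum (fun s (_ : s ∈ Finset.univ) => hud_coord τ hτ s)
      simpa [hgsum (u τ)] using h
    have hbd := (convex_Ici (0:ℝ)).norm_image_sub_le_of_norm_hasDerivWithin_le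
      (f := fun τ => ∑ s, u τ s) (f' := fun _ : ℝ => (0:ℝ)) (C := 0)
      hder (fun τ _ => by simp) (Set.self_mem_Ici) ht
    rw [zero_mul] at hbd
    have h0 : ∑ s, u 0 s = 1 := by rw [hu0']; exact hu0sum
    have := norm_le_zero_iff.mp hbd
    have heq : ∑ s, u t s = ∑ s, u 0 s := by
      have := sub_eq_zero.mp this
      exact this
    rw [heq, h0]
  have hmem : ∀ t ∈ Set.Ici (0:ℝ), u t ∈ simplex S := by
    intro t ht
    refine ⟨fun s => ⟨hnonneg t ht s, ?_⟩, hsum1 t ht⟩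
    have h := Finset.single_le_sum (f := fun s => u t s)
      (fun s _ => hnonneg t ht s) (Finset.mem_univ s)
    rw [hsum1 t ht] at h
    exact h
  have hgf : ∀ t ∈ Set.Ici (0:ℝ), g (u t) = f (u t) := by
    intro t ht
    show f (Stmt11Aux.clampV (u t)) = f (u t)
    rw [Stmt11Aux.clampV_eq_self (fun s => (hmem t ht).1 s)]
  constructor
  · exact ⟨u, hu0',
      fun t ht => by rw [← hgf t ht]; exact hud t ht, hmem⟩
  · intro x y hx0 hy0 hx hy t ht
    have hxc : ContinuousOn x (Set.Icc 0 t) := fun τ hτ =>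
      ((hx τ hτ.1).continuousWithinAt).mono Set.Icc_subset_Ici_self
    have hyc : ContinuousOn y (Set.Icc 0 t) := fun τ hτ =>
      ((hy τ hτ.1).continuousWithinAt).mono Set.Icc_subset_Ici_self
    obtain ⟨R1, hR1⟩ := ((isCompact_Icc.image_of_continuousOn hxc).isBounded).subset_closedBall 0
    obtain ⟨R2, hR2⟩ := ((isCompact_Icc.image_of_continuousOn hyc).isBounded).subset_closedBall 0
    set R := max R1 R2 with hRdef
    obtain ⟨K2, hK2⟩ := Stmt11Aux.lipschitzOnWith_of_contDiff hf_cd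
      (convex_closedBall (0 : S → ℝ) R) (isCompact_closedBall 0 R)
    have hxs : ∀ τ ∈ Set.Ico 0 t, x τ ∈ Metric.closedBall (0 : S → ℝ) R := fun τ hτ =>
      Metric.closedBall_subset_closedBall (le_max_left R1 R2)
        (hR1 ⟨τ, ⟨hτ.1, hτ.2.le⟩, rfl⟩)
    have hys : ∀ τ ∈ Set.Ico 0 t, y τ ∈ Metric.closedBall (0 : S → ℝ) R := fun τ hτ =>
      Metric.closedBall_subset_closedBall (le_max_right R1 R2)
        (hR2 ⟨τ, ⟨hτ.1, hτ.2.le⟩, rfl⟩)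
    have key := ODE_solution_unique_of_mem_Icc_right
      (v := fun _ => f) (s := fun _ => Metric.closedBall (0 : S → ℝ) R)
      (fun _ _ => hK2) hxc
      (fun τ hτ => (hx τ hτ.1).mono (Set.Ici_subset_Ici.mpr hτ.1)) hxs hyc
      (fun τ hτ => (hy τ hτ.1).mono (Set.Ici_subset_Ici.mpr hτ.1)) hys
      (hx0.trans hy0.symm)
    exact key ⟨ht, le_rfl⟩
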